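/- Let n ≥ 1 be an integer and σ a real with 0 < 2σ < n. Let K : (0,∞)×ℝⁿ×ℝⁿ → ℝ be measurable with 0 ≤ K(t,x,y) ≤ C₀·φ_σ(x,t)·φ_σ(y,t)·G(x−y, ct) for some constants C₀ > 0, c > 1, all t > 0 and all x,y ∈ ℝⁿ∖{0}, and write (T_t w)(x) = ∫_{ℝⁿ} K(t,x,y) w(y) dy. Suppose w₀ : ℝⁿ → ℝ is measurable, nonnegative, the function x ↦ |x|^σ w₀(x) is essentially bounded, and |x|^σ w₀(x) → 0 as |x| → ∞. Then lim_{t→∞} t^{σ/2}·sup_{x ∈ ℝⁿ∖{0}} φ_σ(x,t)^{−1}·(T_t w₀)(x) = 0. -/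

import Mathlib

open Real MeasureTheory Filter Pointwise

set_option maxHeartbeats 1000000

/-- The Gauss–Weierstrass heat kernel on `ℝⁿ`. -/
noncomputable def heatKernel (n : ℕ) (x : EuclideanSpace ℝ (Fin n)) (t : ℝ) : ℝ :=
  (4 * Real.pi * t) ^ (-(n : ℝ) / 2) * Real.exp (-‖x‖ ^ 2 / (4 * t))

/-- The weight `φ_σ(x,t) = (√t/|x|)^σ` for `|x| ≤ √t`, and `1` for `|x| ≥ √t`. -/
noncomputable def phiWeight (n : ℕ) (σ : ℝ) (x : EuclideanSpace ℝ (Fin n)) (t : ℝ) : ℝ :=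
  if ‖x‖ ≤ Real.sqrt t then (Real.sqrt t / ‖x‖) ^ σ else 1

lemma hk_nonneg (n : ℕ) (z : EuclideanSpace ℝ (Fin n)) {s : ℝ} (hs : 0 < s) :
    0 ≤ heatKernel n z s := by
  unfold heatKernel; positivity

lemma hk_le (n : ℕ) (z : EuclideanSpace ℝ (Fin n)) {s : ℝ} (hs : 0 < s) :
    heatKernel n z s ≤ (4 * Real.pi * s) ^ (-(n : ℝ) / 2) := by
  unfold heatKernel
  have h1 : Real.exp (-‖z‖ ^ 2 / (4 * s)) ≤ 1 := by
    rw [Real.exp_le_one_iff]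
    apply div_nonpos_of_nonpos_of_nonneg (neg_nonpos.mpr (by positivity)) (by positivity)
  calc (4 * Real.pi * s) ^ (-(n : ℝ) / 2) * Real.exp (-‖z‖ ^ 2 / (4 * s))
      ≤ (4 * Real.pi * s) ^ (-(n : ℝ) / 2) * 1 := by
        apply mul_le_mul_of_nonneg_left h1 (by positivity)
    _ = _ := mul_one _

lemma gauss_integrable (n : ℕ) {b : ℝ} (hb : 0 < b) :
    Integrable (fun v : EuclideanSpace ℝ (Fin n) => Real.exp (-b * ‖v‖ ^ 2)) := by
  have h := (GaussianFourier.integrable_cexp_neg_mul_sq_norm_add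
    (b := (b : ℂ)) (by simpa using hb) 0 (0 : EuclideanSpace ℝ (Fin n))).norm
  refine h.congr (Filter.Eventually.of_forall fun v => ?_)
  show ‖Complex.exp _‖ = _
  rw [Complex.norm_exp]
  congr 1
  simp [← Complex.ofReal_pow, ← Complex.ofReal_mul, ← Complex.ofReal_neg]

lemma hk_integrable (n : ℕ) {s : ℝ} (hs : 0 < s) :
    Integrable (fun v : EuclideanSpace ℝ (Fin n) => heatKernel n v s) := by
  have hb : (0:ℝ) < 1/(4*s) := by positivity
  have h := (gauss_integrable n hb).const_mul ((4 * Real.pi * s) ^ (-(n : ℝ) / 2))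
  refine h.congr (Filter.Eventually.of_forall fun v => ?_)
  unfold heatKernel
  show (4 * Real.pi * s) ^ (-(n : ℝ) / 2) * Real.exp (-(1/(4*s)) * ‖v‖ ^ 2)
      = (4 * Real.pi * s) ^ (-(n : ℝ) / 2) * Real.exp (-‖v‖ ^ 2 / (4 * s))
  have he : -‖v‖ ^ 2 / (4 * s) = -(1/(4*s)) * ‖v‖ ^ 2 := by field_simp
  rw [he]

lemma hk_integral (n : ℕ) {s : ℝ} (hs : 0 < s) :
    ∫ v : EuclideanSpace ℝ (Fin n), heatKernel n v s = 1 := by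
  have key : ∫ v : EuclideanSpace ℝ (Fin n), Real.exp (-(1/(4*s)) * ‖v‖ ^ 2)
      = (Real.pi / (1/(4*s))) ^ ((n : ℝ) / 2) := by
    rw [GaussianFourier.integral_rexp_neg_mul_sq_norm (by positivity)]
    rw [finrank_euclideanSpace_fin]
  have h1 : ∫ v : EuclideanSpace ℝ (Fin n), heatKernel n v s
      = (4 * Real.pi * s) ^ (-(n : ℝ) / 2) * ∫ v : EuclideanSpace ℝ (Fin n),
        Real.exp (-(1/(4*s)) * ‖v‖ ^ 2) := by
    rw [← integral_const_mul]
    congr 1 with v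
    unfold heatKernel
    have he : -‖v‖ ^ 2 / (4 * s) = -(1/(4*s)) * ‖v‖ ^ 2 := by field_simp
    rw [he]
  rw [h1, key]
  have h2 : Real.pi / (1/(4*s)) = 4 * Real.pi * s := by field_simp
  rw [h2, ← Real.rpow_add (by positivity)]
  rw [show -(n:ℝ)/2 + (n:ℝ)/2 = 0 by ring, Real.rpow_zero]

lemma radial_meas (n : ℕ) (p : ℝ) :
    Measurable (fun y : EuclideanSpace ℝ (Fin n) => ‖y‖ ^ (-p)) :=
  by fun_prop

lemma radial_integrableOn_one (n : ℕ) (hn : 1 ≤ n) {p : ℝ} (hp : 0 < p) (hpn : p < n) :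
    IntegrableOn (fun y : EuclideanSpace ℝ (Fin n) => ‖y‖ ^ (-p))
      (Metric.closedBall 0 1) := by
  have hne : Nonempty (Fin n) := ⟨⟨0, hn⟩⟩
  set f := fun y : EuclideanSpace ℝ (Fin n) => ‖y‖ ^ (-p) with hf
  have hfm : Measurable f := radial_meas n p
  have hfnn : ∀ y, 0 ≤ f y := fun y => Real.rpow_nonneg (norm_nonneg _) _
  set S : ℕ → Set (EuclideanSpace ℝ (Fin n)) := fun k =>
    Metric.closedBall 0 ((1/2 : ℝ)^k) \ Metric.closedBall 0 ((1/2 : ℝ)^(k+1)) with hS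
  have hSm : ∀ k, MeasurableSet (S k) :=
    fun k => measurableSet_closedBall.diff measurableSet_closedBall
  have hmem : ∀ k, ∀ y ∈ S k, (1/2:ℝ)^(k+1) < ‖y‖ ∧ ‖y‖ ≤ (1/2:ℝ)^k := by
    intro k y hy
    obtain ⟨h1, h2⟩ := hy
    rw [Metric.mem_closedBall, dist_zero_right] at h1 h2
    exact ⟨not_le.mp h2, h1⟩
  have hbound : ∀ k, ∀ y ∈ S k, f y ≤ ((1/2:ℝ)^(k+1)) ^ (-p) := by
    intro k y hy
    exact Real.rpow_le_rpow_of_nonpos (by positivity) (hmem k y hy).1.le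
      (neg_nonpos.mpr hp.le)
  have hIk : ∀ k, IntegrableOn f (S k) := by
    intro k
    apply Measure.integrableOn_of_bounded
    · exact ne_of_lt (lt_of_le_of_lt (measure_mono Set.diff_subset)
        (isCompact_closedBall _ _).measure_lt_top)
    · exact hfm.aestronglyMeasurable
    · exact (ae_restrict_iff' (hSm k)).mpr (Filter.Eventually.of_forall fun y hy => by
        rw [Real.norm_eq_abs, abs_of_nonneg (hfnn y)]; exact hbound k y hy)
  -- summability
  have hsum : Summable fun k : ℕ => ∫ y in S k, ‖f y‖ := by
    set V : ℝ := (volume (Metric.ball (0 : EuclideanSpace ℝ (Fin n)) 1)).toReal with hV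
    have hVnn : 0 ≤ V := ENNReal.toReal_nonneg
    have hle : ∀ k : ℕ, ∫ y in S k, ‖f y‖
        ≤ (((1/2:ℝ)^(k+1)) ^ (-p) * ((1/2:ℝ)^k) ^ (n:ℕ)) * V := by
      intro k
      have h1 : ∫ y in S k, ‖f y‖ ≤ ∫ _ in S k, ((1/2:ℝ)^(k+1)) ^ (-p) := by
        apply setIntegral_mono_on ((hIk k).norm) (integrableOn_const (ne_of_lt
          (lt_of_le_of_lt (measure_mono Set.diff_subset)
            (isCompact_closedBall _ _).measure_lt_top))) (hSm k)
        intro y hy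
        rw [Real.norm_eq_abs, abs_of_nonneg (hfnn y)]
        exact hbound k y hy
      refine h1.trans ?_
      rw [setIntegral_const, smul_eq_mul]
      have h2 : (volume (S k)).toReal ≤ ((1/2:ℝ)^k) ^ (n:ℕ) * V := by
        have h3 : volume (S k) ≤ volume (Metric.closedBall (0 : EuclideanSpace ℝ (Fin n))
            ((1/2:ℝ)^k)) := measure_mono Set.diff_subset
        have h4 : volume (Metric.closedBall (0 : EuclideanSpace ℝ (Fin n)) ((1/2:ℝ)^k))
            = ENNReal.ofReal (((1/2:ℝ)^k) ^ Module.finrank ℝ (EuclideanSpace ℝ (Fin n)))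
              * volume (Metric.ball (0 : EuclideanSpace ℝ (Fin n)) 1) :=
          Measure.addHaar_closedBall volume 0 (by positivity)
        have hne' : volume (Metric.closedBall (0 : EuclideanSpace ℝ (Fin n)) ((1/2:ℝ)^k)) ≠ ⊤ :=
          (isCompact_closedBall _ _).measure_lt_top.ne
        have h5 := ENNReal.toReal_mono hne' h3
        rw [h4, finrank_euclideanSpace_fin] at h5
        rwa [ENNReal.toReal_mul, ENNReal.toReal_ofReal (by positivity)] at h5
      calc (volume (S k)).toReal * ((1/2:ℝ)^(k+1)) ^ (-p)
          ≤ (((1/2:ℝ)^k) ^ (n:ℕ) * V) * ((1/2:ℝ)^(k+1)) ^ (-p) :=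
            mul_le_mul_of_nonneg_right h2 (by positivity)
        _ = (((1/2:ℝ)^(k+1)) ^ (-p) * ((1/2:ℝ)^k) ^ (n:ℕ)) * V := by ring
      -- end hle
    apply Summable.of_nonneg_of_le
      (fun k => setIntegral_nonneg (hSm k) (fun y _ => norm_nonneg _)) hle
    -- summable of the geometric-type bound
    have hq : ∀ k : ℕ, (((1/2:ℝ)^(k+1)) ^ (-p) * ((1/2:ℝ)^k) ^ (n:ℕ)) * V
        = ((1/2:ℝ) ^ (-p) * V) * (((1/2:ℝ) ^ ((n:ℝ) - p)) ^ k) := by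
      intro k
      have e1 : ((1/2:ℝ)^(k+1)) ^ (-p) = ((1/2:ℝ) ^ ((k:ℝ)+1)) ^ (-p) := by
        rw [← Real.rpow_natCast ((1/2:ℝ)) (k+1)]; push_cast; ring_nf
      have e2 : ((1/2:ℝ)^k : ℝ) ^ (n:ℕ) = (1/2:ℝ) ^ ((k:ℝ) * n) := by
        rw [← Real.rpow_natCast ((1/2:ℝ)) k, ← Real.rpow_natCast _ n,
          ← Real.rpow_mul (by norm_num)]
      have e3 : (((1/2:ℝ) ^ ((n:ℝ) - p)) ^ k) = (1/2:ℝ) ^ (((n:ℝ) - p) * k) := by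
        rw [← Real.rpow_natCast ((1/2:ℝ) ^ ((n:ℝ) - p)) k, ← Real.rpow_mul (by norm_num)]
      rw [e1, e2, e3, ← Real.rpow_mul (by norm_num : (0:ℝ) ≤ 1/2),
        ← Real.rpow_add (by norm_num : (0:ℝ) < 1/2),
        show ((k:ℝ)+1) * (-p) + (k:ℝ) * (n:ℝ) = -p + ((n:ℝ) - p) * (k:ℝ) from by ring,
        Real.rpow_add (by norm_num : (0:ℝ) < 1/2)]
      ring
    simp_rw [hq]
    apply Summable.mul_left
    exact summable_geometric_of_lt_one (by positivity)
      (Real.rpow_lt_one (by norm_num) (by norm_num) (by linarith))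
  have hcover : Metric.closedBall (0 : EuclideanSpace ℝ (Fin n)) 1
      ⊆ {(0 : EuclideanSpace ℝ (Fin n))} ∪ ⋃ k, S k := by
    intro y hy
    by_cases hy0 : y = 0
    · exact Set.mem_union_left _ (by simp [hy0])
    · right
      have hy0' : 0 < ‖y‖ := norm_pos_iff.mpr hy0
      have hex : ∃ m : ℕ, (1/2:ℝ)^(m+1) < ‖y‖ := by
        obtain ⟨m, hm⟩ := exists_pow_lt_of_lt_one hy0' (by norm_num : (1/2:ℝ) < 1)
        exact ⟨m, lt_of_le_of_lt (pow_le_pow_of_le_one (by norm_num) (by norm_num) (Nat.le_succ m)) hm⟩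
      set k := Nat.find hex with hk
      have hk1 : (1/2:ℝ)^(k+1) < ‖y‖ := Nat.find_spec hex
      have hk2 : ‖y‖ ≤ (1/2:ℝ)^k := by
        rcases Nat.eq_zero_or_pos k with h0 | hpos
        · rw [h0, pow_zero]
          rwa [Metric.mem_closedBall, dist_zero_right] at hy
        · obtain ⟨j, hj⟩ := Nat.exists_eq_succ_of_ne_zero hpos.ne'
          have := Nat.find_min hex (by omega : j < k)
          rw [hj]
          exact not_lt.mp (by simpa using this)
      exact Set.mem_iUnion.mpr ⟨k, ⟨by rwa [Metric.mem_closedBall, dist_zero_right],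
        by rw [Metric.mem_closedBall, dist_zero_right]; exact not_le.mpr hk1⟩⟩
  have h0 : IntegrableOn f ({(0 : EuclideanSpace ℝ (Fin n))} : Set _) := by
    have : Nontrivial (EuclideanSpace ℝ (Fin n)) := inferInstance
    unfold IntegrableOn
    rw [Measure.restrict_eq_zero.mpr (measure_singleton 0)]
    exact integrable_zero_measure
  exact (h0.union (integrableOn_iUnion_of_summable_integral_norm hIk hsum)).mono_set hcover

lemma smul_cb (n : ℕ) {r : ℝ} (hr : 0 < r) :
    r • Metric.closedBall (0 : EuclideanSpace ℝ (Fin n)) 1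
      = Metric.closedBall (0 : EuclideanSpace ℝ (Fin n)) r := by
  rw [_root_.smul_closedBall r (0 : EuclideanSpace ℝ (Fin n)) zero_le_one]
  simp [abs_of_pos hr, Real.norm_eq_abs]

lemma radial_scale (n : ℕ) {p : ℝ} {r : ℝ} (hr : 0 < r) :
    ∫ y in Metric.closedBall (0 : EuclideanSpace ℝ (Fin n)) r, ‖y‖ ^ (-p)
      = r ^ ((n:ℝ) - p) *
        ∫ y in Metric.closedBall (0 : EuclideanSpace ℝ (Fin n)) 1, ‖y‖ ^ (-p) := by
  have h := Measure.setIntegral_comp_smul_of_pos volume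
    (fun y : EuclideanSpace ℝ (Fin n) => ‖y‖ ^ (-p)) (Metric.closedBall 0 1) hr
  rw [smul_cb n hr] at h
  have h2 : ∫ x in Metric.closedBall (0 : EuclideanSpace ℝ (Fin n)) 1, ‖r • x‖ ^ (-p)
      = r ^ (-p) * ∫ x in Metric.closedBall (0 : EuclideanSpace ℝ (Fin n)) 1, ‖x‖ ^ (-p) := by
    rw [← integral_const_mul]
    congr 1 with x
    rw [norm_smul, Real.norm_eq_abs, abs_of_pos hr,
      Real.mul_rpow hr.le (norm_nonneg _)]
  rw [h2, finrank_euclideanSpace_fin, smul_eq_mul] at h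
  have hrn : (0:ℝ) < r ^ n := by positivity
  have h3 : r ^ ((n:ℝ) - p) = r ^ n * r ^ (-p) := by
    rw [← Real.rpow_natCast r n, ← Real.rpow_add hr, sub_eq_add_neg]
  rw [h3]
  field_simp at h ⊢
  linarith [h]

lemma radial_integrableOn (n : ℕ) (hn : 1 ≤ n) {p : ℝ} (hp : 0 < p) (hpn : p < n)
    {r : ℝ} (hr : 0 < r) :
    IntegrableOn (fun y : EuclideanSpace ℝ (Fin n) => ‖y‖ ^ (-p))
      (Metric.closedBall 0 r) := by
  have h1 := radial_integrableOn_one n hn hp hpn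
  rw [← integrable_indicator_iff measurableSet_closedBall] at h1 ⊢
  have h2 := (integrable_comp_smul_iff volume
    (Set.indicator (Metric.closedBall (0 : EuclideanSpace ℝ (Fin n)) r)
      (fun y => ‖y‖ ^ (-p))) hr.ne').mp ?_
  · exact h2
  · have heq : (fun x : EuclideanSpace ℝ (Fin n) =>
        Set.indicator (Metric.closedBall 0 r) (fun y => ‖y‖ ^ (-p)) (r • x))
        = fun x => r ^ (-p) * Set.indicator (Metric.closedBall 0 1)
            (fun y : EuclideanSpace ℝ (Fin n) => ‖y‖ ^ (-p)) x := by
      funext x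
      by_cases hx : x ∈ Metric.closedBall (0 : EuclideanSpace ℝ (Fin n)) 1
      · have hx' : r • x ∈ Metric.closedBall (0 : EuclideanSpace ℝ (Fin n)) r := by
          rw [Metric.mem_closedBall, dist_zero_right] at hx ⊢
          rw [norm_smul, Real.norm_eq_abs, abs_of_pos hr]
          calc r * ‖x‖ ≤ r * 1 := by nlinarith
            _ = r := mul_one r
        rw [Set.indicator_of_mem hx', Set.indicator_of_mem hx, norm_smul,
          Real.norm_eq_abs, abs_of_pos hr, Real.mul_rpow hr.le (norm_nonneg _)]
      · have hx' : r • x ∉ Metric.closedBall (0 : EuclideanSpace ℝ (Fin n)) r := by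
          rw [Metric.mem_closedBall, dist_zero_right] at hx ⊢
          rw [norm_smul, Real.norm_eq_abs, abs_of_pos hr]
          intro hcon
          exact hx (by nlinarith)
        rw [Set.indicator_of_notMem hx', Set.indicator_of_notMem hx, mul_zero]
    rw [heq]
    exact h1.const_mul _

/-- If `|x|^σ w₀(x)` is essentially bounded and tends to `0` as `|x| → ∞`, then
`t^{σ/2}·sup_{x ≠ 0} φ_σ(x,t)^{−1}·(T_t w₀)(x) → 0` as `t → ∞`, i.e. for every
`ε > 0` there is `T` such that the weighted quantity is below `ε` for all `t ≥ T`. -/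
theorem weighted_sup_tendsto_zero (n : ℕ) (hn : 1 ≤ n) (σ : ℝ)
    (hσ : 0 < σ) (hσn : 2 * σ < (n : ℝ))
    (K : ℝ → EuclideanSpace ℝ (Fin n) → EuclideanSpace ℝ (Fin n) → ℝ)
    (hKmeas : Measurable fun q : ℝ × EuclideanSpace ℝ (Fin n) × EuclideanSpace ℝ (Fin n) =>
      K q.1 q.2.1 q.2.2)
    (C₀ c : ℝ) (hC₀ : 0 < C₀) (hc : 1 < c)
    (hK0 : ∀ t > (0 : ℝ), ∀ x y, 0 ≤ K t x y)
    (hK : ∀ t > (0 : ℝ), ∀ x y : EuclideanSpace ℝ (Fin n), x ≠ 0 → y ≠ 0 →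
      K t x y ≤ C₀ * phiWeight n σ x t * phiWeight n σ y t * heatKernel n (x - y) (c * t))
    (w₀ : EuclideanSpace ℝ (Fin n) → ℝ) (hw₀meas : Measurable w₀)
    (hw₀0 : ∀ x, 0 ≤ w₀ x)
    (M : ℝ) (hbdd : ∀ᵐ x : EuclideanSpace ℝ (Fin n), ‖x‖ ^ σ * w₀ x ≤ M)
    (hlim : Tendsto (fun x : EuclideanSpace ℝ (Fin n) => ‖x‖ ^ σ * w₀ x)
      (Filter.cocompact _) (nhds 0)) :
    ∀ ε > (0 : ℝ), ∃ T > (0 : ℝ), ∀ t ≥ T, ∀ x : EuclideanSpace ℝ (Fin n), x ≠ 0 →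
      t ^ (σ / 2) * ((phiWeight n σ x t)⁻¹ * ∫ y, K t x y * w₀ y) < ε := by
  intro ε hε
  have hne : Nonempty (Fin n) := ⟨⟨0, hn⟩⟩
  have hσ2 : 0 < 2 * σ := by linarith
  have hc0 : 0 < c := lt_trans one_pos hc
  -- M is nonnegative
  have hμne : (volume : Measure (EuclideanSpace ℝ (Fin n))) ≠ 0 := by
    intro h
    have h2 := Metric.measure_ball_pos (volume : Measure (EuclideanSpace ℝ (Fin n))) 0 one_pos
    rw [h] at h2
    simp at h2
  have : (ae (volume : Measure (EuclideanSpace ℝ (Fin n)))).NeBot := ae_neBot.mpr hμne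
  have hM : 0 ≤ M := by
    obtain ⟨x₀, hx₀⟩ := hbdd.exists
    exact le_trans (mul_nonneg (Real.rpow_nonneg (norm_nonneg _) _) (hw₀0 x₀)) hx₀
  set A1 : ℝ := ∫ y in Metric.closedBall (0 : EuclideanSpace ℝ (Fin n)) 1, ‖y‖ ^ (-(2*σ))
    with hA1def
  have hA1 : 0 ≤ A1 := setIntegral_nonneg measurableSet_closedBall
    fun y _ => Real.rpow_nonneg (norm_nonneg _) _
  set Q : ℝ := (4 * Real.pi * c) ^ (-(n:ℝ)/2) with hQdef
  have hQ : 0 < Q := Real.rpow_pos_of_pos (by positivity) _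
  have hAQ1 : 0 < A1 * Q + 1 := by nlinarith [mul_nonneg hA1 hQ.le]
  set δ : ℝ := ε / (2 * C₀ * (A1 * Q + 1)) with hδdef
  have hδ : 0 < δ := div_pos hε (mul_pos (mul_pos two_pos hC₀) hAQ1)
  -- choose R
  obtain ⟨R, hR1, hRp⟩ : ∃ R : ℝ, 1 ≤ R ∧
      ∀ y : EuclideanSpace ℝ (Fin n), R < ‖y‖ → ‖y‖ ^ σ * w₀ y < δ := by
    have h1 : ∀ᶠ y in cocompact (EuclideanSpace ℝ (Fin n)), dist (‖y‖ ^ σ * w₀ y) 0 < δ :=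
      (Metric.tendsto_nhds.mp hlim) δ hδ
    rw [Filter.eventually_iff, Filter.mem_cocompact] at h1
    obtain ⟨Kc, hKc, hKs⟩ := h1
    obtain ⟨r, hr⟩ := hKc.isBounded.subset_closedBall 0
    refine ⟨max r 1, le_max_right _ _, fun y hy => ?_⟩
    have hyK : y ∉ Kc := by
      intro hmem
      have h3 := hr hmem
      rw [Metric.mem_closedBall, dist_zero_right] at h3
      exact absurd h3 (not_le.mpr (lt_of_le_of_lt (le_max_left r 1) hy))
    have h2 := hKs hyK
    rw [Set.mem_setOf_eq, Real.dist_eq, sub_zero] at h2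
    exact lt_of_le_of_lt (le_abs_self _) h2
  have hR0 : 0 < R := lt_of_lt_of_le one_pos hR1
  set D : ℝ := C₀ * M * Q * R ^ ((n:ℝ) - 2*σ) * A1 with hDdef
  have hdecay : Tendsto (fun t : ℝ => D * t ^ (σ - (n:ℝ)/2)) atTop (nhds 0) := by
    have h1 := tendsto_rpow_neg_atTop (show 0 < (n:ℝ)/2 - σ by linarith)
    have h2 := h1.const_mul D
    rw [mul_zero] at h2
    have h3 : (fun t : ℝ => D * t ^ (σ - (n:ℝ)/2))
        = fun t : ℝ => D * t ^ (-((n:ℝ)/2 - σ)) := by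
      funext t
      rw [show σ - (n:ℝ)/2 = -((n:ℝ)/2 - σ) from by ring]
    rw [h3]
    exact h2
  have hev : ∀ᶠ t in atTop, D * t ^ (σ - (n:ℝ)/2) < ε/2 :=
    hdecay.eventually_lt_const (by linarith)
  obtain ⟨T₁, hT₁⟩ := Filter.eventually_atTop.mp hev
  refine ⟨max T₁ ((R+1)^2), lt_max_of_lt_right (by positivity), fun t ht x hx => ?_⟩
  have htT₁ : T₁ ≤ t := le_trans (le_max_left _ _) ht
  have htR : (R+1)^2 ≤ t := le_trans (le_max_right _ _) ht
  have ht0 : 0 < t := lt_of_lt_of_le (by positivity) htR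
  have hsq : R + 1 ≤ Real.sqrt t := by
    rw [show R + 1 = Real.sqrt ((R+1)^2) from (Real.sqrt_sq (by positivity)).symm]
    exact Real.sqrt_le_sqrt htR
  have hRsq : R < Real.sqrt t := lt_of_lt_of_le (by linarith) hsq
  have hsq0 : 0 < Real.sqrt t := lt_of_lt_of_le (by positivity) hsq
  have hct : 0 < c * t := mul_pos hc0 ht0
  set P : ℝ := (4 * Real.pi * (c * t)) ^ (-(n:ℝ)/2) with hPdef
  have hP0 : 0 < P := Real.rpow_pos_of_pos (by positivity) _
  have hPQ : P = Q * t ^ (-(n:ℝ)/2) := by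
    rw [hPdef, hQdef, show 4 * Real.pi * (c * t) = (4 * Real.pi * c) * t from by ring,
      Real.mul_rpow (by positivity) ht0.le]
  -- phi facts
  have hφpos : ∀ y : EuclideanSpace ℝ (Fin n), y ≠ 0 → 0 < phiWeight n σ y t := by
    intro y hy
    unfold phiWeight
    split
    · exact Real.rpow_pos_of_pos (div_pos hsq0 (norm_pos_iff.mpr hy)) _
    · exact one_pos
  have hφnn : ∀ y : EuclideanSpace ℝ (Fin n), 0 ≤ phiWeight n σ y t := by
    intro y
    unfold phiWeight
    split
    · exact Real.rpow_nonneg (div_nonneg hsq0.le (norm_nonneg _)) _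
    · exact zero_le_one
  have hφeq : ∀ y : EuclideanSpace ℝ (Fin n), ‖y‖ ≤ Real.sqrt t →
      phiWeight n σ y t = t ^ (σ/2) * ‖y‖ ^ (-σ) := by
    intro y hyt
    unfold phiWeight
    rw [if_pos hyt, Real.div_rpow (Real.sqrt_nonneg t) (norm_nonneg y),
      Real.sqrt_eq_rpow, ← Real.rpow_mul ht0.le,
      show 1/2 * σ = σ/2 from by ring, Real.rpow_neg (norm_nonneg y), div_eq_mul_inv]
  set G : EuclideanSpace ℝ (Fin n) → ℝ := fun y => heatKernel n (x - y) (c * t) with hGdef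
  have hG0 : ∀ y, 0 ≤ G y := fun y => hk_nonneg n _ hct
  have hGP : ∀ y, G y ≤ P := fun y => hk_le n _ hct
  have hGint : Integrable G := (hk_integrable n hct).comp_sub_left x
  have hGintegral : ∫ y, G y = 1 := by
    rw [hGdef]
    rw [integral_sub_left_eq_self (fun v => heatKernel n v (c*t)) volume x]
    exact hk_integral n hct
  set b : EuclideanSpace ℝ (Fin n) → ℝ :=
    fun y => (if ‖y‖ ≤ R then M else δ) * ‖y‖ ^ (-σ) with hbdef
  have hbnn : ∀ y, 0 ≤ b y := by
    intro y
    apply mul_nonneg _ (Real.rpow_nonneg (norm_nonneg _) _)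
    split
    · exact hM
    · exact hδ.le
  set v : EuclideanSpace ℝ (Fin n) → ℝ := fun y => phiWeight n σ y t * b y * G y with hvdef
  have hvnn : ∀ y, 0 ≤ v y := fun y => mul_nonneg (mul_nonneg (hφnn y) (hbnn y)) (hG0 y)
  set u1 : EuclideanSpace ℝ (Fin n) → ℝ :=
    Set.indicator (Metric.closedBall 0 R)
      (fun y => (M * t^(σ/2) * P) * ‖y‖ ^ (-(2*σ))) with hu1def
  set u2 : EuclideanSpace ℝ (Fin n) → ℝ :=
    Set.indicator (Metric.closedBall 0 (Real.sqrt t))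
      (fun y => (δ * t^(σ/2) * P) * ‖y‖ ^ (-(2*σ))) with hu2def
  set u3 : EuclideanSpace ℝ (Fin n) → ℝ := fun y => (δ * t ^ (-(σ/2))) * G y with hu3def
  have hu1nn : ∀ y, 0 ≤ u1 y := Set.indicator_nonneg fun y _ =>
    mul_nonneg (mul_nonneg (mul_nonneg hM (Real.rpow_nonneg ht0.le _)) hP0.le)
      (Real.rpow_nonneg (norm_nonneg _) _)
  have hu2nn : ∀ y, 0 ≤ u2 y := Set.indicator_nonneg fun y _ =>
    mul_nonneg (mul_nonneg (mul_nonneg hδ.le (Real.rpow_nonneg ht0.le _)) hP0.le)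
      (Real.rpow_nonneg (norm_nonneg _) _)
  have hu3nn : ∀ y, 0 ≤ u3 y := fun y =>
    mul_nonneg (mul_nonneg hδ.le (Real.rpow_nonneg ht0.le _)) (hG0 y)
  -- key pointwise inequality
  have hkey : ∀ y, v y ≤ u1 y + u2 y + u3 y := by
    intro y
    by_cases hy0 : y = 0
    · have hb0 : b y = 0 := by
        rw [hbdef]
        simp only [hy0, norm_zero]
        rw [Real.zero_rpow (by linarith : -σ ≠ 0), mul_zero]
      have hv0 : v y = 0 := by
        rw [hvdef]
        simp only
        rw [hb0, mul_zero, zero_mul]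
      rw [hv0]
      exact add_nonneg (add_nonneg (hu1nn y) (hu2nn y)) (hu3nn y)
    · have hy0' : 0 < ‖y‖ := norm_pos_iff.mpr hy0
      by_cases h1 : ‖y‖ ≤ R
      · have hyt : ‖y‖ ≤ Real.sqrt t := le_trans h1 hRsq.le
        have hvy : v y = (M * t^(σ/2) * ‖y‖ ^ (-(2*σ))) * G y := by
          rw [hvdef]
          simp only
          rw [hφeq y hyt, hbdef]
          simp only [if_pos h1]
          rw [show -(2*σ) = -σ + -σ from by ring, Real.rpow_add hy0']
          ring
        have h2 : v y ≤ (M * t^(σ/2) * P) * ‖y‖ ^ (-(2*σ)) := by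
          rw [hvy]
          calc (M * t^(σ/2) * ‖y‖ ^ (-(2*σ))) * G y
              ≤ (M * t^(σ/2) * ‖y‖ ^ (-(2*σ))) * P :=
                mul_le_mul_of_nonneg_left (hGP y)
                  (mul_nonneg (mul_nonneg hM (Real.rpow_nonneg ht0.le _))
                    (Real.rpow_nonneg (norm_nonneg _) _))
            _ = (M * t^(σ/2) * P) * ‖y‖ ^ (-(2*σ)) := by ring
        have hmem : y ∈ Metric.closedBall (0 : EuclideanSpace ℝ (Fin n)) R := by
          rw [Metric.mem_closedBall, dist_zero_right]; exact h1
        have hu1y : u1 y = (M * t^(σ/2) * P) * ‖y‖ ^ (-(2*σ)) := by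
          rw [hu1def]; exact Set.indicator_of_mem hmem _
        rw [← hu1y] at h2
        linarith [hu2nn y, hu3nn y]
      · by_cases h2 : ‖y‖ ≤ Real.sqrt t
        · have hvy : v y = (δ * t^(σ/2) * ‖y‖ ^ (-(2*σ))) * G y := by
            rw [hvdef]
            simp only
            rw [hφeq y h2, hbdef]
            simp only [if_neg h1]
            rw [show -(2*σ) = -σ + -σ from by ring, Real.rpow_add hy0']
            ring
          have h3 : v y ≤ (δ * t^(σ/2) * P) * ‖y‖ ^ (-(2*σ)) := by
            rw [hvy]
            calc (δ * t^(σ/2) * ‖y‖ ^ (-(2*σ))) * G y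
                ≤ (δ * t^(σ/2) * ‖y‖ ^ (-(2*σ))) * P :=
                  mul_le_mul_of_nonneg_left (hGP y)
                    (mul_nonneg (mul_nonneg hδ.le (Real.rpow_nonneg ht0.le _))
                      (Real.rpow_nonneg (norm_nonneg _) _))
              _ = (δ * t^(σ/2) * P) * ‖y‖ ^ (-(2*σ)) := by ring
          have hmem : y ∈ Metric.closedBall (0 : EuclideanSpace ℝ (Fin n)) (Real.sqrt t) := by
            rw [Metric.mem_closedBall, dist_zero_right]; exact h2
          have hu2y : u2 y = (δ * t^(σ/2) * P) * ‖y‖ ^ (-(2*σ)) := by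
            rw [hu2def]; exact Set.indicator_of_mem hmem _
          rw [← hu2y] at h3
          linarith [hu1nn y, hu3nn y]
        · have hφ1 : phiWeight n σ y t = 1 := by unfold phiWeight; rw [if_neg h2]
          have hle : ‖y‖ ^ (-σ) ≤ t ^ (-(σ/2)) := by
            have h3 : Real.sqrt t ≤ ‖y‖ := (not_le.mp h2).le
            have h4 := Real.rpow_le_rpow_of_nonpos hsq0 h3 (neg_nonpos.mpr hσ.le)
            calc ‖y‖ ^ (-σ) ≤ (Real.sqrt t) ^ (-σ) := h4
              _ = t ^ (-(σ/2)) := by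
                  rw [Real.sqrt_eq_rpow, ← Real.rpow_mul ht0.le,
                    show 1/2 * (-σ) = -(σ/2) from by ring]
          have h5 : v y ≤ u3 y := by
            rw [hvdef, hu3def]
            simp only
            rw [hφ1, hbdef]
            simp only [if_neg h1]
            rw [one_mul]
            apply mul_le_mul_of_nonneg_right _ (hG0 y)
            exact mul_le_mul_of_nonneg_left hle hδ.le
          linarith [hu1nn y, hu2nn y]
  -- integrability
  have hi1 : Integrable u1 := by
    rw [hu1def, integrable_indicator_iff measurableSet_closedBall]
    exact (radial_integrableOn n hn hσ2 hσn hR0).const_mul _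
  have hi2 : Integrable u2 := by
    rw [hu2def, integrable_indicator_iff measurableSet_closedBall]
    exact (radial_integrableOn n hn hσ2 hσn hsq0).const_mul _
  have hi3 : Integrable u3 := hGint.const_mul _
  have husum : Integrable (fun y => u1 y + u2 y + u3 y) := (hi1.add hi2).add hi3
  have hφmeas : Measurable (fun y : EuclideanSpace ℝ (Fin n) => phiWeight n σ y t) := by
    unfold phiWeight
    exact Measurable.ite (measurableSet_le measurable_norm measurable_const)
      (by fun_prop) measurable_const
  have hbmeas : Measurable b := by
    rw [hbdef]
    apply Measurable.mul
    · exact Measurable.ite (measurableSet_le measurable_norm measurable_const)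
        measurable_const measurable_const
    · fun_prop
  have hGmeas : Measurable G := by
    rw [hGdef]
    unfold heatKernel
    fun_prop
  have hvmeas : Measurable v := (hφmeas.mul hbmeas).mul hGmeas
  have hvint : Integrable v := by
    apply Integrable.mono' husum hvmeas.aestronglyMeasurable
    exact Filter.Eventually.of_forall fun y => by
      rw [Real.norm_eq_abs, abs_of_nonneg (hvnn y)]
      exact hkey y
  have hvle : ∫ y, v y ≤ (∫ y, u1 y) + (∫ y, u2 y) + (∫ y, u3 y) := by
    calc ∫ y, v y ≤ ∫ y, (u1 y + u2 y + u3 y) :=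
          integral_mono_ae hvint husum (Filter.Eventually.of_forall hkey)
      _ = _ := by
          have ha := integral_add (hi1.add hi2) hi3
          have hb := integral_add hi1 hi2
          simp only [Pi.add_apply] at ha
          rw [ha, hb]
  -- integral values
  have hI1 : ∫ y, u1 y = (M * t^(σ/2) * P) * (R ^ ((n:ℝ) - 2*σ) * A1) := by
    rw [hu1def, integral_indicator measurableSet_closedBall, integral_const_mul,
      radial_scale n hR0]
  have hI2 : ∫ y, u2 y = (δ * t^(σ/2) * P) * ((Real.sqrt t) ^ ((n:ℝ) - 2*σ) * A1) := by
    rw [hu2def, integral_indicator measurableSet_closedBall, integral_const_mul,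
      radial_scale n hsq0]
  have hI3 : ∫ y, u3 y = δ * t ^ (-(σ/2)) := by
    rw [hu3def, integral_const_mul, hGintegral, mul_one]
  -- comparison of the main integral
  have h0ae : ∀ᵐ y : EuclideanSpace ℝ (Fin n), y ≠ 0 := by
    rw [ae_iff]
    simpa using measure_singleton (0 : EuclideanSpace ℝ (Fin n))
  have hKxy : Measurable (fun y => K t x y) :=
    hKmeas.comp (measurable_const.prodMk (measurable_const.prodMk measurable_id))
  have hfmeas : Measurable (fun y => K t x y * w₀ y) := hKxy.mul hw₀meas
  have hfae : ∀ᵐ y : EuclideanSpace ℝ (Fin n),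
      K t x y * w₀ y ≤ (C₀ * phiWeight n σ x t) * v y := by
    filter_upwards [hbdd, h0ae] with y hby hy0
    have hy0' : 0 < ‖y‖ := norm_pos_iff.mpr hy0
    have hw : w₀ y ≤ b y := by
      have hinv : ‖y‖ ^ (-σ) * ‖y‖ ^ σ = 1 := by
        rw [← Real.rpow_add hy0']
        simp
      have hwy : w₀ y = ‖y‖ ^ (-σ) * (‖y‖ ^ σ * w₀ y) := by
        rw [← mul_assoc, hinv, one_mul]
      by_cases h1 : ‖y‖ ≤ R
      · rw [hbdef]
        simp only [if_pos h1]
        rw [hwy]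
        calc ‖y‖ ^ (-σ) * (‖y‖ ^ σ * w₀ y) ≤ ‖y‖ ^ (-σ) * M :=
              mul_le_mul_of_nonneg_left hby (Real.rpow_nonneg (norm_nonneg _) _)
          _ = M * ‖y‖ ^ (-σ) := mul_comm _ _
      · rw [hbdef]
        simp only [if_neg h1]
        rw [hwy]
        calc ‖y‖ ^ (-σ) * (‖y‖ ^ σ * w₀ y) ≤ ‖y‖ ^ (-σ) * δ :=
              mul_le_mul_of_nonneg_left (hRp y (not_le.mp h1)).le
                (Real.rpow_nonneg (norm_nonneg _) _)
          _ = δ * ‖y‖ ^ (-σ) := mul_comm _ _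
    have hKb := hK t ht0 x y hx hy0
    calc K t x y * w₀ y
        ≤ (C₀ * phiWeight n σ x t * phiWeight n σ y t * heatKernel n (x - y) (c * t)) * w₀ y :=
          mul_le_mul_of_nonneg_right hKb (hw₀0 y)
      _ ≤ (C₀ * phiWeight n σ x t * phiWeight n σ y t * heatKernel n (x - y) (c * t)) * b y :=
          mul_le_mul_of_nonneg_left hw
            (mul_nonneg (mul_nonneg (mul_nonneg hC₀.le (hφnn x)) (hφnn y)) (hG0 y))
      _ = (C₀ * phiWeight n σ x t) * v y := by
          rw [hvdef, hGdef]
          ring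
  have hfnn : ∀ y, 0 ≤ K t x y * w₀ y := fun y => mul_nonneg (hK0 t ht0 x y) (hw₀0 y)
  have hfint : Integrable (fun y => K t x y * w₀ y) := by
    apply Integrable.mono' (hvint.const_mul (C₀ * phiWeight n σ x t))
      hfmeas.aestronglyMeasurable
    filter_upwards [hfae] with y hy
    rw [Real.norm_eq_abs, abs_of_nonneg (hfnn y)]
    exact hy
  have hfle : ∫ y, K t x y * w₀ y ≤ (C₀ * phiWeight n σ x t) * ∫ y, v y := by
    calc ∫ y, K t x y * w₀ y ≤ ∫ y, (C₀ * phiWeight n σ x t) * v y :=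
          integral_mono_ae hfint (hvint.const_mul _) hfae
      _ = _ := integral_const_mul _ _
  have hφx : 0 < phiWeight n σ x t := hφpos x hx
  have hvint_nn : 0 ≤ ∫ y, v y := integral_nonneg hvnn
  have hchain : t ^ (σ/2) * ((phiWeight n σ x t)⁻¹ * ∫ y, K t x y * w₀ y)
      ≤ t ^ (σ/2) * (C₀ * ((∫ y, u1 y) + (∫ y, u2 y) + (∫ y, u3 y))) := by
    apply mul_le_mul_of_nonneg_left _ (Real.rpow_nonneg ht0.le _)
    have h1 : (phiWeight n σ x t)⁻¹ * ∫ y, K t x y * w₀ y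
        ≤ (phiWeight n σ x t)⁻¹ * ((C₀ * phiWeight n σ x t) * ∫ y, v y) :=
      mul_le_mul_of_nonneg_left hfle (inv_nonneg.mpr hφx.le)
    have h2 : (phiWeight n σ x t)⁻¹ * ((C₀ * phiWeight n σ x t) * ∫ y, v y)
        = C₀ * ∫ y, v y := by
      field_simp
    have h3 : C₀ * ∫ y, v y ≤ C₀ * ((∫ y, u1 y) + (∫ y, u2 y) + (∫ y, u3 y)) :=
      mul_le_mul_of_nonneg_left hvle hC₀.le
    linarith
  -- algebraic identities
  have e1 : t^(σ/2) * (C₀ * ((M * t^(σ/2) * P) * (R ^ ((n:ℝ) - 2*σ) * A1)))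
      = D * t ^ (σ - (n:ℝ)/2) := by
    rw [hPQ, hDdef]
    have key : t^(σ/2) * (t^(σ/2) * t^(-(n:ℝ)/2)) = t^(σ - (n:ℝ)/2) := by
      rw [← Real.rpow_add ht0, ← Real.rpow_add ht0,
        show σ/2 + (σ/2 + -(n:ℝ)/2) = σ - (n:ℝ)/2 from by ring]
    linear_combination (C₀ * M * Q * R ^ ((n:ℝ) - 2*σ) * A1) * key
  have e2 : t^(σ/2) * (C₀ * ((δ * t^(σ/2) * P) * ((Real.sqrt t) ^ ((n:ℝ) - 2*σ) * A1)))
      = C₀ * δ * A1 * Q := by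
    rw [hPQ]
    have e3 : (Real.sqrt t) ^ ((n:ℝ) - 2*σ) = t ^ (((n:ℝ) - 2*σ)/2) := by
      rw [Real.sqrt_eq_rpow, ← Real.rpow_mul ht0.le,
        show 1/2 * ((n:ℝ) - 2*σ) = ((n:ℝ) - 2*σ)/2 from by ring]
    rw [e3]
    have key : t^(σ/2) * (t^(σ/2) * (t^(-(n:ℝ)/2) * t^(((n:ℝ) - 2*σ)/2))) = 1 := by
      rw [← Real.rpow_add ht0, ← Real.rpow_add ht0, ← Real.rpow_add ht0,
        show σ/2 + (σ/2 + (-(n:ℝ)/2 + ((n:ℝ) - 2*σ)/2)) = 0 from by ring, Real.rpow_zero]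
    linear_combination (C₀ * δ * A1 * Q) * key
  have e4 : t^(σ/2) * (C₀ * (δ * t ^ (-(σ/2)))) = C₀ * δ := by
    have key : t^(σ/2) * t^(-(σ/2)) = 1 := by
      rw [← Real.rpow_add ht0, show σ/2 + -(σ/2) = 0 from by ring, Real.rpow_zero]
    linear_combination (C₀ * δ) * key
  have hδeq : C₀ * δ * A1 * Q + C₀ * δ = ε/2 := by
    rw [hδdef]
    field_simp
  have hfirst : D * t ^ (σ - (n:ℝ)/2) < ε/2 := hT₁ t htT₁
  have hfinal : t ^ (σ/2) * (C₀ * ((∫ y, u1 y) + (∫ y, u2 y) + (∫ y, u3 y))) < ε := by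
    rw [hI1, hI2, hI3]
    have expand : t^(σ/2) * (C₀ * ((M * t^(σ/2) * P) * (R ^ ((n:ℝ) - 2*σ) * A1)
          + (δ * t^(σ/2) * P) * ((Real.sqrt t) ^ ((n:ℝ) - 2*σ) * A1)
          + δ * t ^ (-(σ/2))))
        = t^(σ/2) * (C₀ * ((M * t^(σ/2) * P) * (R ^ ((n:ℝ) - 2*σ) * A1)))
          + t^(σ/2) * (C₀ * ((δ * t^(σ/2) * P) * ((Real.sqrt t) ^ ((n:ℝ) - 2*σ) * A1)))
          + t^(σ/2) * (C₀ * (δ * t ^ (-(σ/2)))) := by ring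
    rw [expand, e1, e2, e4]
    linarith
  exact lt_of_le_of_lt hchain hfinal
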